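/- Let n ≥ 1 and let A be an n×n Perron–Frobenius matrix with spectral radius λ(A). Then the number of indices i for which the row sum ∑_j A_{ij} is at least 2 is at most λ(A)^n − 1, and likewise the number of indices j for which the column sum ∑_i A_{ij} is at least 2 is at most λ(A)^n − 1. -/

import Mathlib

open scoped ENNReal NNReal Matrix
open Finset

/-- A Perron–Frobenius matrix: a square matrix with nonnegative integer entries
(entries in `ℕ`) such that some positive power has all entries strictly positive. -/
def IsPerronFrobenius {n : ℕ} (A : Matrix (Fin n) (Fin n) ℕ) : Prop :=
  ∃ k : ℕ, 0 < k ∧ ∀ i j, 0 < (A ^ k) i j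

/-- The spectral radius `λ(A)` of a nonnegative integer matrix, defined as the
spectral radius of the matrix obtained by casting its entries into `ℂ`. -/
noncomputable def matrixSpectralRadius {n : ℕ} (A : Matrix (Fin n) (Fin n) ℕ) : ℝ≥0∞ :=
  spectralRadius ℂ (A.map (Nat.cast : ℕ → ℂ))

namespace PFAux

variable {n : ℕ}

/-- Row sum of a natural matrix. -/
def rowSum (A : Matrix (Fin n) (Fin n) ℕ) (v : Fin n) : ℕ := ∑ u, A v u

lemma rowSum_mul (A B : Matrix (Fin n) (Fin n) ℕ) (v : Fin n) :
    rowSum (A * B) v = ∑ w, A v w * rowSum B w := by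
  simp only [rowSum, Matrix.mul_apply, Finset.mul_sum]
  exact Finset.sum_comm

lemma rowSum_one (v : Fin n) : rowSum (1 : Matrix (Fin n) (Fin n) ℕ) v = 1 := by
  simp [rowSum, Matrix.one_apply]

lemma rowSum_pos (A : Matrix (Fin n) (Fin n) ℕ)
    (hA : ∃ k : ℕ, 0 < k ∧ ∀ i j, 0 < (A ^ k) i j) (v : Fin n) :
    1 ≤ rowSum A v := by
  obtain ⟨k, hk, hpos⟩ := hA
  obtain ⟨k', rfl⟩ : ∃ k', k = k' + 1 := ⟨k - 1, by omega⟩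
  rw [Nat.one_le_iff_ne_zero]
  intro h0
  have hz : ∀ w, A v w = 0 := by
    intro w
    have := (Finset.sum_eq_zero_iff.mp h0) w (mem_univ w)
    exact this
  have hp := hpos v v
  rw [pow_succ', Matrix.mul_apply] at hp
  simp [hz] at hp

/-- One step of reachability expansion. -/
def step (A : Matrix (Fin n) (Fin n) ℕ) (S : Finset (Fin n)) : Finset (Fin n) :=
  S ∪ univ.filter (fun u => ∃ w ∈ S, 0 < A w u)

lemma subset_step (A : Matrix (Fin n) (Fin n) ℕ) (S : Finset (Fin n)) : S ⊆ step A S :=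
  Finset.subset_union_left

lemma mem_step_iterate (A : Matrix (Fin n) (Fin n) ℕ) (v : Fin n) :
    ∀ t u, u ∈ (step A)^[t] {v} ↔ ∃ k ≤ t, 0 < (A ^ k) v u := by
  intro t
  induction t with
  | zero =>
    intro u
    simp only [Function.iterate_zero, id_eq, Finset.mem_singleton]
    constructor
    · rintro rfl
      exact ⟨0, le_refl 0, by simp [Matrix.one_apply]⟩
    · rintro ⟨k, hk, hpos⟩
      have : k = 0 := Nat.le_zero.mp hk
      subst this
      simp only [pow_zero, Matrix.one_apply] at hpos
      by_contra hne
      simp [Ne.symm hne] at hpos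
  | succ t ih =>
    intro u
    rw [Function.iterate_succ_apply']
    constructor
    · intro hu
      rcases Finset.mem_union.mp hu with h | h
      · obtain ⟨k, hk, hpos⟩ := (ih u).mp h
        exact ⟨k, by omega, hpos⟩
      · obtain ⟨w, hw, hAwu⟩ := (Finset.mem_filter.mp h).2
        obtain ⟨k, hk, hpos⟩ := (ih w).mp hw
        refine ⟨k + 1, by omega, ?_⟩
        rw [pow_succ, Matrix.mul_apply]
        exact Finset.sum_pos' (fun _ _ => Nat.zero_le _)
          ⟨w, mem_univ w, Nat.mul_pos hpos hAwu⟩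
    · rintro ⟨k, hk, hpos⟩
      rcases Nat.lt_or_ge k (t + 1) with h | h
      · exact Finset.mem_union_left _ ((ih u).mpr ⟨k, by omega, hpos⟩)
      · have hk1 : k = t + 1 := by omega
        subst hk1
        rw [pow_succ, Matrix.mul_apply] at hpos
        have : ∃ w ∈ (univ : Finset (Fin n)), 0 < (A ^ t) v w * A w u := by
          by_contra hcon
          push_neg at hcon
          have : ∑ w, (A ^ t) v w * A w u = 0 :=
            Finset.sum_eq_zero (fun w hw => Nat.le_zero.mp (hcon w hw))
          omega
        obtain ⟨w, _, hw⟩ := this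
        refine Finset.mem_union_right _ (Finset.mem_filter.mpr ⟨mem_univ u, w, ?_, ?_⟩)
        · exact (ih w).mpr ⟨t, le_refl t, (CanonicallyOrderedAdd.mul_pos.mp hw).1⟩
        · exact (CanonicallyOrderedAdd.mul_pos.mp hw).2

lemma iterate_mono (A : Matrix (Fin n) (Fin n) ℕ) (v : Fin n) {a b : ℕ} (h : a ≤ b) :
    (step A)^[a] {v} ⊆ (step A)^[b] {v} := by
  induction b with
  | zero => simpa [Nat.le_zero.mp h]
  | succ b ih =>
    rcases Nat.lt_or_ge a (b + 1) with h' | h'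
    · rw [Function.iterate_succ_apply']
      exact (ih (by omega)).trans (subset_step A _)
    · have : a = b + 1 := by omega
      subst this; rfl

lemma iterate_fixed (A : Matrix (Fin n) (Fin n) ℕ) (v : Fin n) {t : ℕ}
    (h : (step A)^[t + 1] {v} = (step A)^[t] {v}) :
    ∀ s, t ≤ s → (step A)^[s] {v} = (step A)^[t] {v} := by
  intro s hs
  induction s with
  | zero => simp [Nat.le_zero.mp hs]
  | succ s ih =>
    rcases Nat.lt_or_ge t (s + 1) with h' | h'
    · have hts : t ≤ s := by omega
      rw [Function.iterate_succ_apply', ih hts, ← Function.iterate_succ_apply' (step A) t {v}]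
      exact h
    · have : t = s + 1 := by omega
      subst this; rfl

lemma card_or_fixed (A : Matrix (Fin n) (Fin n) ℕ) (v : Fin n) :
    ∀ t, (step A)^[t + 1] {v} = (step A)^[t] {v} ∨ t + 1 ≤ ((step A)^[t] {v}).card := by
  intro t
  induction t with
  | zero => right; simp
  | succ t ih =>
    by_cases hfix : (step A)^[t + 1 + 1] {v} = (step A)^[t + 1] {v}
    · left; exact hfix
    · right
      rcases ih with h | h
      · exact absurd (by
          rw [Function.iterate_succ_apply' (step A) (t+1) {v}, h,
            ← Function.iterate_succ_apply' (step A) t {v}]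
          exact h) hfix
      · have hne : (step A)^[t] {v} ≠ (step A)^[t + 1] {v} := by
          intro he
          exact hfix (by
            rw [Function.iterate_succ_apply' (step A) (t+1) {v}, ← he,
              ← Function.iterate_succ_apply' (step A) t {v}]
            exact he.symm)
        have hsub := iterate_mono A v (show t ≤ t + 1 by omega)
        have hlt := Finset.card_lt_card (Finset.ssubset_iff_subset_ne.mpr ⟨hsub, hne⟩)
        omega

/-- Every vertex reachable at all is reachable within `n - 1` steps. -/
lemma reach (A : Matrix (Fin n) (Fin n) ℕ)
    (hA : ∃ k : ℕ, 0 < k ∧ ∀ i j, 0 < (A ^ k) i j) (hn : 1 ≤ n) (v u : Fin n) :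
    ∃ k ≤ n - 1, 0 < (A ^ k) v u := by
  obtain ⟨K, hK, hpos⟩ := hA
  have hu : u ∈ (step A)^[K] {v} := (mem_step_iterate A v K u).mpr ⟨K, le_refl K, hpos v u⟩
  have hmem : u ∈ (step A)^[n - 1] {v} := by
    rcases card_or_fixed A v (n - 1) with h | h
    · have hfix := iterate_fixed A v h (max K (n - 1)) (le_max_right _ _)
      exact hfix ▸ iterate_mono A v (le_max_left K (n - 1)) hu
    · have h2 : ((step A)^[n - 1] {v}).card ≤ n := by
        simpa using Finset.card_le_univ ((step A)^[n - 1] {v})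
      have huniv : (step A)^[n - 1] {v} = univ :=
        Finset.eq_univ_of_card _ (by rw [Fintype.card_fin]; omega)
      simp [huniv]
  exact (mem_step_iterate A v (n - 1) u).mp hmem

lemma key_step (A : Matrix (Fin n) (Fin n) ℕ)
    (hA : ∃ k : ℕ, 0 < k ∧ ∀ i j, 0 < (A ^ k) i j) (v : Fin n) (t : ℕ) :
    rowSum (A ^ t) v + (univ.filter fun w => 2 ≤ rowSum A w ∧ 0 < (A ^ t) v w).card
      ≤ rowSum (A ^ (t + 1)) v := by
  rw [pow_succ, rowSum_mul]
  rw [Finset.card_filter]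
  have hL : rowSum (A ^ t) v + ∑ w, (if 2 ≤ rowSum A w ∧ 0 < (A ^ t) v w then 1 else 0)
      = ∑ w, ((A ^ t) v w + if 2 ≤ rowSum A w ∧ 0 < (A ^ t) v w then 1 else 0) := by
    rw [Finset.sum_add_distrib]; rfl
  rw [hL]
  refine Finset.sum_le_sum fun w _ => ?_
  by_cases hw : 2 ≤ rowSum A w ∧ 0 < (A ^ t) v w
  · rw [if_pos hw]
    have h2 : (A ^ t) v w * 2 ≤ (A ^ t) v w * rowSum A w :=
      Nat.mul_le_mul_left _ hw.1
    have h1 : 1 ≤ (A ^ t) v w := hw.2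
    omega
  · simp only [hw, if_neg, not_false_iff, Nat.add_zero]
    exact Nat.le_mul_of_pos_right _ (rowSum_pos A hA w)

lemma rowSum_pow_card (A : Matrix (Fin n) (Fin n) ℕ)
    (hA : ∃ k : ℕ, 0 < k ∧ ∀ i j, 0 < (A ^ k) i j) (hn : 1 ≤ n) (v : Fin n) :
    (univ.filter fun w => 2 ≤ rowSum A w).card + 1 ≤ rowSum (A ^ n) v := by
  have hacc : ∀ t, 1 + ∑ k ∈ Finset.range t,
      (univ.filter fun w => 2 ≤ rowSum A w ∧ 0 < (A ^ k) v w).card ≤ rowSum (A ^ t) v := by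
    intro t
    induction t with
    | zero => simp [rowSum_one]
    | succ t ih =>
      rw [Finset.sum_range_succ]
      have := key_step A hA v t
      omega
  have hcover : (univ.filter fun w => 2 ≤ rowSum A w) ⊆
      (Finset.range n).biUnion
        (fun k => univ.filter fun w => 2 ≤ rowSum A w ∧ 0 < (A ^ k) v w) := by
    intro w hw
    obtain ⟨k, hk, hpos⟩ := reach A hA hn v w
    exact Finset.mem_biUnion.mpr ⟨k, Finset.mem_range.mpr (by omega),
      Finset.mem_filter.mpr ⟨mem_univ w, (Finset.mem_filter.mp hw).2, hpos⟩⟩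
  have hcard := (Finset.card_le_card hcover).trans Finset.card_biUnion_le
  have := hacc n
  omega

lemma rowSum_pow_mul (A : Matrix (Fin n) (Fin n) ℕ) (c : ℕ)
    (hc : ∀ v, c ≤ rowSum (A ^ n) v) :
    ∀ j v, c ^ (j + 1) ≤ rowSum (A ^ (n * (j + 1))) v := by
  intro j
  induction j with
  | zero => intro v; simpa using hc v
  | succ j ih =>
    intro v
    have hsplit : n * (j + 1 + 1) = n * (j + 1) + n := by ring
    have h1 : ∑ w, (A ^ (n * (j + 1))) v w * c
        ≤ ∑ w, (A ^ (n * (j + 1))) v w * rowSum (A ^ n) w :=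
      Finset.sum_le_sum fun w _ => Nat.mul_le_mul_left _ (hc w)
    rw [hsplit, pow_add A (n * (j + 1)) n, rowSum_mul]
    calc c ^ (j + 1 + 1) = c ^ (j + 1) * c := by ring
    _ ≤ rowSum (A ^ (n * (j + 1))) v * c := Nat.mul_le_mul_right _ (ih v)
    _ = ∑ w, (A ^ (n * (j + 1))) v w * c := by rw [rowSum, Finset.sum_mul]
    _ ≤ _ := h1

section Analytic

attribute [local instance] Matrix.linftyOpNormedRing Matrix.linftyOpNormedAlgebra

lemma le_nnnorm_of_rowSum (A : Matrix (Fin n) (Fin n) ℕ) (N : ℕ) (v : Fin n) :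
    ((rowSum (A ^ N) v : ℝ≥0)) ≤ ‖(A.map (Nat.cast : ℕ → ℂ)) ^ N‖₊ := by
  have hmap : (A.map (Nat.cast : ℕ → ℂ)) ^ N = (A ^ N).map (Nat.cast : ℕ → ℂ) := by
    have := map_pow ((Nat.castRingHom ℂ).mapMatrix) A N
    simpa [RingHom.mapMatrix_apply] using this.symm
  rw [hmap, Matrix.linfty_opNNNorm_def]
  have hrow : ∑ j, ‖((A ^ N).map (Nat.cast : ℕ → ℂ)) v j‖₊ = ((rowSum (A ^ N) v : ℝ≥0)) := by
    simp [Matrix.map_apply, rowSum, Nat.cast_sum]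
  rw [← hrow]
  exact Finset.le_sup (f := fun i => ∑ j, ‖((A ^ N).map (Nat.cast : ℕ → ℂ)) i j‖₊)
    (mem_univ v)

lemma card_add_one_le_spectralRadius_pow (hn : 1 ≤ n) (A : Matrix (Fin n) (Fin n) ℕ)
    (hA : ∃ k : ℕ, 0 < k ∧ ∀ i j, 0 < (A ^ k) i j) :
    (((univ.filter fun w => 2 ≤ rowSum A w).card + 1 : ℕ) : ℝ≥0∞)
      ≤ spectralRadius ℂ (A.map (Nat.cast : ℕ → ℂ)) ^ n := by
  haveI : CompleteSpace (Matrix (Fin n) (Fin n) ℂ) := FiniteDimensional.complete ℂ _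
  set c : ℕ := (univ.filter fun w => 2 ≤ rowSum A w).card + 1 with hc
  set a : Matrix (Fin n) (Fin n) ℂ := A.map (Nat.cast : ℕ → ℂ) with ha
  have gel := spectrum.pow_nnnorm_pow_one_div_tendsto_nhds_spectralRadius a
  have hg : Filter.Tendsto (fun k : ℕ => n * (k + 1)) Filter.atTop Filter.atTop :=
    Filter.tendsto_atTop_mono
      (fun k => le_trans (Nat.le_succ k) (Nat.le_mul_of_pos_left (k + 1) hn))
      Filter.tendsto_id
  have hcomp := gel.comp hg
  have key : ∀ k : ℕ, ((c : ℝ≥0∞)) ^ ((1 : ℝ) / n)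
      ≤ (‖a ^ (n * (k + 1))‖₊ : ℝ≥0∞) ^ ((1 : ℝ) / (n * (k + 1) : ℕ)) := by
    intro k
    have hnat : c ^ (k + 1) ≤ rowSum (A ^ (n * (k + 1))) ⟨0, hn⟩ :=
      rowSum_pow_mul A c (fun v => rowSum_pow_card A hA hn v) k ⟨0, hn⟩
    have hnorm : ((c : ℝ≥0)) ^ (k + 1) ≤ ‖a ^ (n * (k + 1))‖₊ := by
      calc ((c : ℝ≥0)) ^ (k + 1) = ((c ^ (k + 1) : ℕ) : ℝ≥0) := by push_cast; ring
      _ ≤ ((rowSum (A ^ (n * (k + 1))) ⟨0, hn⟩ : ℕ) : ℝ≥0) := by exact_mod_cast hnat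
      _ ≤ _ := le_nnnorm_of_rowSum A (n * (k + 1)) ⟨0, hn⟩
    have hENN : ((c : ℝ≥0∞)) ^ (k + 1) ≤ (‖a ^ (n * (k + 1))‖₊ : ℝ≥0∞) := by
      exact_mod_cast hnorm
    have hmono := ENNReal.rpow_le_rpow hENN
      (by positivity : (0 : ℝ) ≤ (1 : ℝ) / (n * (k + 1) : ℕ))
    refine le_trans (le_of_eq ?_) hmono
    rw [← ENNReal.rpow_natCast ((c : ℝ≥0∞)) (k + 1), ← ENNReal.rpow_mul]
    congr 1
    have hn0 : (n : ℝ) ≠ 0 := by positivity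
    have hk0 : ((k : ℝ) + 1) ≠ 0 := by positivity
    push_cast
    field_simp
  have hle : ((c : ℝ≥0∞)) ^ ((1 : ℝ) / n) ≤ spectralRadius ℂ a :=
    ge_of_tendsto hcomp (Filter.Eventually.of_forall fun k => by simpa using key k)
  calc ((c : ℝ≥0∞)) = (((c : ℝ≥0∞)) ^ ((1 : ℝ) / n)) ^ (n : ℕ) := by
        rw [← ENNReal.rpow_natCast (((c : ℝ≥0∞)) ^ ((1 : ℝ) / n)) n, ← ENNReal.rpow_mul,
          one_div, inv_mul_cancel₀ (by positivity : (n : ℝ) ≠ 0), ENNReal.rpow_one]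
  _ ≤ spectralRadius ℂ a ^ n := pow_le_pow_left' hle n

end Analytic

lemma spectrum_transpose (B : Matrix (Fin n) (Fin n) ℂ) :
    spectrum ℂ Bᵀ = spectrum ℂ B := by
  ext z
  rw [spectrum.mem_iff, spectrum.mem_iff]
  have h : algebraMap ℂ (Matrix (Fin n) (Fin n) ℂ) z - Bᵀ
      = (algebraMap ℂ (Matrix (Fin n) (Fin n) ℂ) z - B)ᵀ := by
    rw [Matrix.transpose_sub]
    congr 1
    simp [Algebra.algebraMap_eq_smul_one, Matrix.transpose_smul, Matrix.transpose_one]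
  rw [h, Matrix.isUnit_iff_isUnit_det, Matrix.isUnit_iff_isUnit_det, Matrix.det_transpose]

lemma matrixSpectralRadius_transpose (A : Matrix (Fin n) (Fin n) ℕ) :
    matrixSpectralRadius Aᵀ = matrixSpectralRadius A := by
  unfold matrixSpectralRadius spectralRadius
  rw [Matrix.transpose_map, spectrum_transpose]

lemma isPF_transpose (A : Matrix (Fin n) (Fin n) ℕ) (hA : IsPerronFrobenius A) :
    IsPerronFrobenius Aᵀ := by
  obtain ⟨k, hk, hpos⟩ := hA
  refine ⟨k, hk, fun i j => ?_⟩
  rw [← Matrix.transpose_pow]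
  exact hpos j i

lemma main_row {n : ℕ} (hn : 1 ≤ n) (A : Matrix (Fin n) (Fin n) ℕ)
    (hA : IsPerronFrobenius A) :
    ((Finset.univ.filter fun i => 2 ≤ ∑ j, A i j).card : ℝ≥0∞)
      ≤ matrixSpectralRadius A ^ n - 1 := by
  have h := card_add_one_le_spectralRadius_pow hn A hA
  refine ENNReal.le_sub_of_add_le_right (by simp) ?_
  have heq : (Finset.univ.filter fun i => 2 ≤ ∑ j, A i j)
      = (univ.filter fun w => 2 ≤ rowSum A w) := rfl
  rw [heq]
  calc ((univ.filter fun w => 2 ≤ rowSum A w).card : ℝ≥0∞) + 1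
      = (((univ.filter fun w => 2 ≤ rowSum A w).card + 1 : ℕ) : ℝ≥0∞) := by push_cast; ring
  _ ≤ _ := h

end PFAux

/-- For an `n × n` Perron–Frobenius matrix `A` with `n ≥ 1`, the number of rows
whose row sum is at least `2` is at most `λ(A)^n − 1`, and likewise for the number
of columns whose column sum is at least `2`. -/
theorem card_big_rows_cols_le {n : ℕ} (hn : 1 ≤ n)
    (A : Matrix (Fin n) (Fin n) ℕ) (hA : IsPerronFrobenius A) :
    (((Finset.univ.filter fun i => 2 ≤ ∑ j, A i j).card : ℝ≥0∞) ≤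
        matrixSpectralRadius A ^ n - 1) ∧
      (((Finset.univ.filter fun j => 2 ≤ ∑ i, A i j).card : ℝ≥0∞) ≤
        matrixSpectralRadius A ^ n - 1) := by
  constructor
  · exact PFAux.main_row hn A hA
  · have h := PFAux.main_row hn Aᵀ (PFAux.isPF_transpose A hA)
    rw [PFAux.matrixSpectralRadius_transpose] at h
    have heq : (Finset.univ.filter fun j => 2 ≤ ∑ i, A i j)
        = (Finset.univ.filter fun i => 2 ≤ ∑ j, Aᵀ i j) := rfl
    rw [heq]
    exact h
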